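/- arXiv:2410.16195 — 3 statements merged into one kernel-verified Lean document; each statement's English description precedes it below -/
import Mathlib

section
/- Under the same setting, if the direction V lies in a product of local RKHSs H₁ × … × H_D with kernels k_a, then the directional derivative DJ[0](V) equals ∑_{a=1}^D ⟨−E_{z∼q}[k_a(z,·) ∂_{z_a} log p(z) + ∂_{z_a} k_a(z,·)], v_a⟩_{H_a}, so the functional gradient of J at 0 has a-th component (∇J[0](·))_a = −E_{z∼q}[k_a(z,·) ∂_{z_a} log p(z) + ∂_{z_a} k_a(z,·)]. -/
open MeasureTheory RealInnerProductSpace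

/-- In a product of local RKHSs H₁ × … × H_D, the first variation
DJ[0](V) = −E_{z∼q}[∑_a ∂_{z_a} log p(z) v_a(z) + ∂_{z_a} v_a(z)] equals
∑_a ⟨g_a, v_a⟩ where g_a = −E_{z∼q}[k_a(z,·) ∂_{z_a} log p(z) + ∂_{z_a} k_a(z,·)];
i.e., the functional gradient of J at 0 has a-th component g_a. -/
theorem stein_functional_gradient_local_kernels (D : ℕ)
    (X : Type*) [MeasurableSpace X]
    (q : Measure X) [IsProbabilityMeasure q]
    -- the local RKHSs
    (H : Fin D → Type*) [∀ a, NormedAddCommGroup (H a)]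
    [∀ a, InnerProductSpace ℝ (H a)] [∀ a, CompleteSpace (H a)]
    -- evaluation of f ∈ H_a at z, and its partial derivative ∂_{z_a} at z
    (ev : (a : Fin D) → H a → X → ℝ) (evd : (a : Fin D) → H a → X → ℝ)
    -- representers k_a(z,·) and ∂_{z_a} k_a(z,·)
    (K : (a : Fin D) → X → H a) (Kd : (a : Fin D) → X → H a)
    -- reproducing properties
    (hrep : ∀ a (f : H a) z, ev a f z = ⟪K a z, f⟫)
    (hrepd : ∀ a (f : H a) z, evd a f z = ⟪Kd a z, f⟫)
    -- ∂_{z_a} log p(z)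
    (s : Fin D → X → ℝ)
    -- the direction V = (v₁, …, v_D)
    (V : (a : Fin D) → H a)
    -- the first variation, as established previously
    (DJ0 : ((a : Fin D) → H a) → ℝ)
    (hDJ0 : DJ0 V = -∫ z, (∑ a, (s a z * ev a (V a) z + evd a (V a) z)) ∂q)
    -- Bochner integrability (expectations commute with inner products)
    (hint : ∀ a, Integrable (fun z => s a z • K a z + Kd a z) q) :
    DJ0 V = ∑ a, ⟪-∫ z, (s a z • K a z + Kd a z) ∂q, V a⟫ := by
  rw [hDJ0]
  have hterm : ∀ a (z : X), s a z * ev a (V a) z + evd a (V a) z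
      = ⟪V a, s a z • K a z + Kd a z⟫ := by
    intro a z
    simp [hrep, hrepd, inner_add_right, real_inner_smul_right, real_inner_comm,
      mul_comm]
  have hint' : ∀ a, Integrable (fun z => s a z * ev a (V a) z + evd a (V a) z) q := by
    intro a
    refine ((hint a).const_inner (V a)).congr ?_
    filter_upwards with z using (hterm a z).symm
  rw [integral_finset_sum _ (fun a _ => hint' a)]
  rw [neg_eq_iff_eq_neg, ← Finset.sum_neg_distrib]
  refine Finset.sum_congr rfl fun a _ => ?_
  simp_rw [hterm a]
  rw [integral_inner (hint a)]
  rw [inner_neg_left, real_inner_comm]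

  simp
end

section
/- The second variation of the Stein variational objective at 0 along directions V, W ∈ H₁ × … × H_D equals ∑_{a,b} ⟨⟨h_{ab}(x,y), w_b(y)⟩_{H_b}, v_a(x)⟩_{H_a}, where h_{ab}(x,y) = E_{z∼q}[−k_a(z,x) k_b(z,y) ∂²_{ab} log p(z) + ∂_{z_a} k_b(z,y) ∂_{z_b} k_a(z,x)]. -/
open MeasureTheory RealInnerProductSpace

/-- Second variation of the Stein variational objective in a product of local RKHSs:
D²J[0](V,W) = ∑_{a,b} ⟨⟨h_{ab}(x,y), w_b(y)⟩_{H_b}, v_a(x)⟩_{H_a} with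
h_{ab}(x,y) = E_{z∼q}[−k_a(z,x) k_b(z,y) ∂²_{ab} log p(z)
              + ∂_{z_a} k_b(z,y) ∂_{z_b} k_a(z,x)]. -/
theorem stein_second_variation_local_kernels (D : ℕ)
    (X : Type*) [MeasurableSpace X]
    (q : Measure X) [IsProbabilityMeasure q]
    (H : Fin D → Type*) [∀ a, NormedAddCommGroup (H a)]
    [∀ a, InnerProductSpace ℝ (H a)] [∀ a, CompleteSpace (H a)]
    -- evaluation of f ∈ H_a at z, and partial derivative ∂_{z_b} (ev a f) at z
    (ev : (a : Fin D) → H a → X → ℝ)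
    (evd : (b : Fin D) → (a : Fin D) → H a → X → ℝ)
    -- representers: K a z = k_a(z,·) ∈ H_a, and Kd b a z = ∂_{z_b} k_a(z,·) ∈ H_a
    (K : (a : Fin D) → X → H a)
    (Kd : (b : Fin D) → (a : Fin D) → X → H a)
    -- reproducing properties: v_a(z) = ⟨k_a(z,·), v_a⟩, ∂_{z_b} v_a(z) = ⟨∂_{z_b} k_a(z,·), v_a⟩
    (hrep : ∀ a (f : H a) z, ev a f z = ⟪K a z, f⟫)
    (hrepd : ∀ b a (f : H a) z, evd b a f z = ⟪Kd b a z, f⟫)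
    -- hess a b z = ∂²_{ab} log p(z)
    (hess : Fin D → Fin D → X → ℝ)
    (hhess_symm : ∀ a b z, hess a b z = hess b a z)
    -- the directions V, W
    (V W : (a : Fin D) → H a)
    -- the second variation, as established previously:
    -- D²J[0](V,W) = −E_{z∼q}[W(z)ᵀ ∇²_z log p(z) V(z) − trace(∇_z W(z) ∇_z V(z))]
    (D2J : ((a : Fin D) → H a) → ((a : Fin D) → H a) → ℝ)
    (hD2J : D2J V W =
      -∫ z, ((∑ a, ∑ b, ev b (W b) z * hess b a z * ev a (V a) z) -
             (∑ a, ∑ b, evd a b (W b) z * evd b a (V a) z)) ∂q)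
    -- Bochner integrability (expectations commute with inner products)
    (hint : ∀ a b, Integrable
      (fun z => ((-(hess a b z)) * ⟪K b z, W b⟫) • K a z +
        ⟪Kd a b z, W b⟫ • Kd b a z) q) :
    D2J V W = ∑ a, ∑ b,
      ⟪∫ z, (((-(hess a b z)) * ⟪K b z, W b⟫) • K a z +
          ⟪Kd a b z, W b⟫ • Kd b a z) ∂q, V a⟫ := by
  set g : Fin D → Fin D → X → ℝ := fun a b z =>
    ⟪(((-(hess a b z)) * ⟪K b z, W b⟫) • K a z + ⟪Kd a b z, W b⟫ • Kd b a z), V a⟫ with hg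
  have hgint : ∀ a b, Integrable (g a b) q := fun a b => (hint a b).inner_const (V a)
  have hinner : ∀ a b, ⟪∫ z, (((-(hess a b z)) * ⟪K b z, W b⟫) • K a z +
      ⟪Kd a b z, W b⟫ • Kd b a z) ∂q, V a⟫ = ∫ z, g a b z ∂q := by
    intro a b
    rw [real_inner_comm, ← integral_inner (hint a b)]
    exact integral_congr_ae (Filter.Eventually.of_forall fun z => real_inner_comm _ _)
  have h1 : ∀ a, ∑ b, ∫ z, g a b z ∂q = ∫ z, ∑ b, g a b z ∂q :=
    fun a => (integral_finset_sum _ fun b _ => hgint a b).symm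
  rw [hD2J]
  simp_rw [hinner, h1]
  rw [← integral_finset_sum _ (fun a _ => integrable_finset_sum _ fun b _ => hgint a b),
    ← integral_neg]
  congr 1
  funext z
  simp only [hg, inner_add_left, real_inner_smul_left]
  simp_rw [hrep, hrepd]
  rw [neg_sub, ← Finset.sum_sub_distrib]
  refine Finset.sum_congr rfl fun a _ => ?_
  rw [← Finset.sum_sub_distrib]
  refine Finset.sum_congr rfl fun b _ => ?_
  rw [hhess_symm b a]
  ring
end

section
/- A vector w* with ‖w*‖₂ ≤ Δ is a global solution of the trust-region subproblem min_{‖w‖₂ ≤ Δ} gᵀw + ½ wᵀHw (H symmetric) if and only if there exists λ ≥ 0 such that (H + λI)w* = −g, H + λI is positive semidefinite, and λ(Δ − ‖w*‖₂) = 0. -/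
open Matrix

lemma dv_symm {D : ℕ} (H : Matrix (Fin D) (Fin D) ℝ) (hH : H.IsSymm) (a b : Fin D → ℝ) :
    a ⬝ᵥ H.mulVec b = b ⬝ᵥ H.mulVec a := by
  rw [Matrix.dotProduct_mulVec, ← Matrix.mulVec_transpose, hH.eq, dotProduct_comm]

lemma expand1 {D : ℕ} (H : Matrix (Fin D) (Fin D) ℝ) (hH : H.IsSymm) (g a x : Fin D → ℝ) :
    g ⬝ᵥ (a + x) + (1/2) * ((a + x) ⬝ᵥ H.mulVec (a + x)) =
      (g ⬝ᵥ a + (1/2) * (a ⬝ᵥ H.mulVec a)) + (g + H.mulVec a) ⬝ᵥ x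
        + (1/2) * (x ⬝ᵥ H.mulVec x) := by
  simp only [Matrix.mulVec_add, dotProduct_add, add_dotProduct]
  rw [dotProduct_comm (H.mulVec a) x, dv_symm H hH x a]
  ring

lemma eps_nonneg (a C t0 : ℝ) (ht0 : 0 < t0)
    (h : ∀ t : ℝ, 0 < t → t ≤ t0 → -(C * t) ≤ a) : 0 ≤ a := by
  by_contra hn
  push_neg at hn
  rcases le_or_gt C 0 with hC | hC
  · have := h t0 ht0 le_rfl; nlinarith
  · have h1 : 0 < min t0 (-a / (2 * C)) :=
      lt_min ht0 (div_pos (by linarith) (by linarith))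
    have h2 := h _ h1 (min_le_left _ _)
    have h3 : min t0 (-a / (2 * C)) ≤ -a / (2 * C) := min_le_right _ _
    have h4 : C * (-a / (2 * C)) = -a / 2 := by field_simp
    nlinarith [mul_le_mul_of_nonneg_left h3 hC.le]

lemma hdiv (a K t : ℝ) (ht : 0 < t) (h : 0 ≤ t * a + t ^ 2 * K) : -(K * t) ≤ a := by
  have := (mul_le_mul_iff_right₀ ht).mp (show t * (-(K * t)) ≤ t * a by nlinarith)
  exact this

lemma key_expand {D : ℕ} (H : Matrix (Fin D) (Fin D) ℝ) (hH : H.IsSymm) (lam : ℝ)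
    (g wstar : Fin D → ℝ)
    (hg : (H + lam • (1 : Matrix (Fin D) (Fin D) ℝ)).mulVec wstar = -g)
    (w : Fin D → ℝ) :
    (g ⬝ᵥ w + (1/2) * (w ⬝ᵥ H.mulVec w)) - (g ⬝ᵥ wstar + (1/2) * (wstar ⬝ᵥ H.mulVec wstar)) =
      (1/2) * ((w - wstar) ⬝ᵥ (H + lam • (1 : Matrix (Fin D) (Fin D) ℝ)).mulVec (w - wstar))
        + (lam/2) * (wstar ⬝ᵥ wstar - w ⬝ᵥ w) := by
  have h2 : H.mulVec wstar + lam • wstar = -g := by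
    rw [Matrix.add_mulVec, Matrix.smul_mulVec, Matrix.one_mulVec] at hg
    exact hg
  have hg' : g = -(H.mulVec wstar) - lam • wstar := by
    have h3 := congrArg (fun z => -z) h2
    simp only [neg_neg] at h3
    rw [← h3, neg_add, sub_eq_add_neg]
  subst hg'
  simp only [Matrix.add_mulVec, Matrix.smul_mulVec, Matrix.one_mulVec,
    Matrix.mulVec_sub, dotProduct_sub, sub_dotProduct,
    dotProduct_add, add_dotProduct, smul_dotProduct,
    dotProduct_smul, neg_dotProduct, dotProduct_neg,
    smul_eq_mul]
  rw [dotProduct_comm (H.mulVec wstar) wstar, dv_symm H hH w wstar,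
    dotProduct_comm w wstar]
  rw [dotProduct_comm (H.mulVec wstar) w, dv_symm H hH w wstar]
  ring

set_option maxHeartbeats 2000000 in
/-- Moré–Sorensen characterization: w* with ‖w*‖₂ ≤ Δ globally solves the
trust-region subproblem min_{‖w‖₂ ≤ Δ} gᵀw + ½wᵀHw (H symmetric) iff there is
λ ≥ 0 with (H + λI)w* = −g, H + λI PSD, and λ(Δ − ‖w*‖₂) = 0. -/
theorem more_sorensen_characterization (D : ℕ)
    (H : Matrix (Fin D) (Fin D) ℝ) (hH : H.IsSymm)
    (g : Fin D → ℝ) (Δ : ℝ) (hΔ : 0 < Δ)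
    (m : (Fin D → ℝ) → ℝ)
    (hm : m = fun w => g ⬝ᵥ w + (1/2) * (w ⬝ᵥ H.mulVec w))
    (wstar : Fin D → ℝ) (hw : Real.sqrt (∑ j, (wstar j)^2) ≤ Δ) :
    (∀ w, Real.sqrt (∑ j, (w j)^2) ≤ Δ → m wstar ≤ m w) ↔
    ∃ lam : ℝ, 0 ≤ lam ∧
      (H + lam • (1 : Matrix (Fin D) (Fin D) ℝ)).mulVec wstar = -g ∧
      (H + lam • (1 : Matrix (Fin D) (Fin D) ℝ)).PosSemidef ∧
      lam * (Δ - Real.sqrt (∑ j, (wstar j)^2)) = 0 := by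
  have hmval : ∀ w, m w = g ⬝ᵥ w + (1/2) * (w ⬝ᵥ H.mulVec w) := fun w => by rw [hm]
  have hsum : ∀ w : Fin D → ℝ, ∑ j, (w j)^2 = w ⬝ᵥ w := by
    intro w; simp [dotProduct, pow_two]
  have hnn : ∀ w : Fin D → ℝ, 0 ≤ w ⬝ᵥ w := fun w =>
    Finset.sum_nonneg fun j _ => mul_self_nonneg _
  have hfeas : ∀ w : Fin D → ℝ, w ⬝ᵥ w ≤ Δ ^ 2 ↔ Real.sqrt (∑ j, (w j)^2) ≤ Δ := by
    intro w; rw [hsum, Real.sqrt_le_left hΔ.le]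
  have hns : wstar ⬝ᵥ wstar ≤ Δ ^ 2 := (hfeas wstar).mpr hw
  constructor
  · -- forward direction
    intro hmin
    set r := g + H.mulVec wstar with hr
    -- base inequality
    have base : ∀ x : Fin D → ℝ, (wstar + x) ⬝ᵥ (wstar + x) ≤ Δ ^ 2 →
        0 ≤ r ⬝ᵥ x + (1/2) * (x ⬝ᵥ H.mulVec x) := by
      intro x hx
      have h1 := hmin (wstar + x) ((hfeas _).mp hx)
      rw [hmval, hmval, expand1 H hH g wstar x] at h1
      linarith
    -- expansion of squared norm of wstar + x
    have hnorm : ∀ (s t : ℝ) (v : Fin D → ℝ),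
        (s • wstar + t • v) ⬝ᵥ (s • wstar + t • v) =
          s ^ 2 * (wstar ⬝ᵥ wstar) + 2 * s * t * (wstar ⬝ᵥ v) + t ^ 2 * (v ⬝ᵥ v) := by
      intro s t v
      simp only [dotProduct_add, add_dotProduct, smul_dotProduct,
        dotProduct_smul, smul_eq_mul]
      rw [dotProduct_comm v wstar]
      ring
    rcases lt_or_eq_of_le hns with hint | hbd
    · -- interior case : lam = 0
      have hstep : ∀ v : Fin D → ℝ, ∀ t : ℝ, 0 < t →
          t ≤ min 1 ((Δ ^ 2 - wstar ⬝ᵥ wstar) / (2 * |wstar ⬝ᵥ v| + v ⬝ᵥ v + 1)) →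
          0 ≤ t * (r ⬝ᵥ v) + t ^ 2 * ((1/2) * (v ⬝ᵥ H.mulVec v)) := by
        intro v t ht htle
        have ht1 : t ≤ 1 := le_trans htle (min_le_left _ _)
        have ht2 : t ≤ (Δ ^ 2 - wstar ⬝ᵥ wstar) / (2 * |wstar ⬝ᵥ v| + v ⬝ᵥ v + 1) :=
          le_trans htle (min_le_right _ _)
        have hden : 0 < 2 * |wstar ⬝ᵥ v| + v ⬝ᵥ v + 1 := by
          have := abs_nonneg (wstar ⬝ᵥ v); have := hnn v; linarith
        have ht3 : t * (2 * |wstar ⬝ᵥ v| + v ⬝ᵥ v + 1) ≤ Δ ^ 2 - wstar ⬝ᵥ wstar := by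
          rw [← le_div_iff₀ hden]; exact ht2
        have hx : (wstar + t • v) ⬝ᵥ (wstar + t • v) ≤ Δ ^ 2 := by
          have h1 : wstar + t • v = (1 : ℝ) • wstar + t • v := by rw [one_smul]
          rw [h1, hnorm 1 t v]
          have habs : wstar ⬝ᵥ v ≤ |wstar ⬝ᵥ v| := le_abs_self _
          have k1 : 2 * t * (wstar ⬝ᵥ v) ≤ 2 * t * |wstar ⬝ᵥ v| :=
            mul_le_mul_of_nonneg_left habs (by linarith)
          have k2 : t ^ 2 * (v ⬝ᵥ v) ≤ t * (v ⬝ᵥ v) := by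
            nlinarith [hnn v, mul_nonneg ht.le (hnn v)]
          nlinarith [hnn v]
        have hb := base (t • v) hx
        have e1 : r ⬝ᵥ (t • v) = t * (r ⬝ᵥ v) := by
          rw [dotProduct_smul]; simp [smul_eq_mul]
        have e2 : (t • v) ⬝ᵥ H.mulVec (t • v) = t ^ 2 * (v ⬝ᵥ H.mulVec v) := by
          rw [Matrix.mulVec_smul, smul_dotProduct, dotProduct_smul]
          simp [smul_eq_mul]; ring
        rw [e1, e2] at hb
        linarith
      -- nonnegativity of r ⬝ᵥ v for every v
      have hrv : ∀ v : Fin D → ℝ, 0 ≤ r ⬝ᵥ v := by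
        intro v
        set t0 := min 1 ((Δ ^ 2 - wstar ⬝ᵥ wstar) / (2 * |wstar ⬝ᵥ v| + v ⬝ᵥ v + 1)) with ht0def
        have hden : 0 < 2 * |wstar ⬝ᵥ v| + v ⬝ᵥ v + 1 := by
          have := abs_nonneg (wstar ⬝ᵥ v); have := hnn v; linarith
        have ht0 : 0 < t0 := lt_min one_pos (div_pos (by linarith) hden)
        apply eps_nonneg _ ((1/2) * (v ⬝ᵥ H.mulVec v)) t0 ht0
        intro t ht htle
        exact hdiv _ _ t ht (hstep v t ht htle)
      have hr0 : r = 0 := by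
        have h1 := hrv (-r)
        rw [dotProduct_neg] at h1
        have h2 : r ⬝ᵥ r = 0 := le_antisymm (by linarith) (hnn r)
        exact dotProduct_self_eq_zero.mp h2
      have hHpos : ∀ v : Fin D → ℝ, 0 ≤ v ⬝ᵥ H.mulVec v := by
        intro v
        set t0 := min 1 ((Δ ^ 2 - wstar ⬝ᵥ wstar) / (2 * |wstar ⬝ᵥ v| + v ⬝ᵥ v + 1)) with ht0def
        have hden : 0 < 2 * |wstar ⬝ᵥ v| + v ⬝ᵥ v + 1 := by
          have := abs_nonneg (wstar ⬝ᵥ v); have := hnn v; linarith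
        have ht0 : 0 < t0 := lt_min one_pos (div_pos (by linarith) hden)
        have h1 := hstep v t0 ht0 le_rfl
        have h2 : r ⬝ᵥ v = 0 := by rw [hr0]; simp
        rw [h2] at h1
        by_contra hneg
        push_neg at hneg
        have : t0 ^ 2 * (1/2 * (v ⬝ᵥ H.mulVec v)) < 0 :=
          mul_neg_of_pos_of_neg (pow_pos ht0 2) (by linarith)
        linarith
      refine ⟨0, le_refl 0, ?_, ?_, by ring⟩
      · simp only [zero_smul, add_zero]
        have : g + H.mulVec wstar = 0 := hr0
        exact eq_neg_of_add_eq_zero_left (by rw [add_comm] at this; exact this)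
      · apply PosSemidef.of_dotProduct_mulVec_nonneg
        · simp only [zero_smul, add_zero]
          rw [Matrix.IsHermitian, Matrix.conjTranspose_eq_transpose_of_trivial]
          exact hH
        · intro x
          simp only [zero_smul, add_zero, star_trivial]
          exact hHpos x
    · -- boundary case
      -- Step 1 : r ⬝ᵥ wstar ≤ 0
      have hstep1 : r ⬝ᵥ wstar ≤ 0 := by
        have h := eps_nonneg (-(r ⬝ᵥ wstar)) ((wstar ⬝ᵥ H.mulVec wstar)/2) 1 one_pos ?_
        · linarith
        · intro t ht ht1
          have hx : (wstar + (-t) • wstar) ⬝ᵥ (wstar + (-t) • wstar) ≤ Δ ^ 2 := by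
            have h1 : wstar + (-t) • wstar = (1 - t) • wstar + (0:ℝ) • wstar := by module
            rw [h1, hnorm (1 - t) 0 wstar]
            nlinarith [hnn wstar, hbd, mul_nonneg ht.le (show (0:ℝ) ≤ 2 - t by linarith)]
          have hb := base ((-t) • wstar) hx
          have e1 : r ⬝ᵥ ((-t) • wstar) = -t * (r ⬝ᵥ wstar) := by
            rw [dotProduct_smul]; simp [smul_eq_mul]
          have e2 : ((-t) • wstar) ⬝ᵥ H.mulVec ((-t) • wstar)
              = t ^ 2 * (wstar ⬝ᵥ H.mulVec wstar) := by
            rw [Matrix.mulVec_smul, smul_dotProduct, dotProduct_smul]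
            simp [smul_eq_mul]; ring
          rw [e1, e2] at hb
          exact hdiv _ _ t ht (by nlinarith)
      -- Step 2 : tangential first-order condition
      have tangent : ∀ v : Fin D → ℝ, v ⬝ᵥ wstar = 0 → 0 ≤ r ⬝ᵥ v := by
        intro v hv
        rcases eq_or_ne v 0 with rfl | hv0
        · simp
        · have hnv : 0 < v ⬝ᵥ v :=
            lt_of_le_of_ne (hnn v) (fun h => hv0 (dotProduct_self_eq_zero.mp h.symm))
          set β := (v ⬝ᵥ v) / Δ ^ 2 with hβ
          have hβpos : 0 < β := div_pos hnv (by positivity)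
          have hβΔ : β * Δ ^ 2 = v ⬝ᵥ v := by rw [hβ]; field_simp
          set K := β * (|r ⬝ᵥ wstar| + |wstar ⬝ᵥ H.mulVec wstar|/2 + |wstar ⬝ᵥ H.mulVec v|)
              + |v ⬝ᵥ H.mulVec v|/2 with hK
          have hsq : 0 < Real.sqrt (v ⬝ᵥ v) := Real.sqrt_pos.mpr hnv
          have ht0 : 0 < min 1 (Δ / Real.sqrt (v ⬝ᵥ v)) := lt_min one_pos (div_pos hΔ hsq)
          apply eps_nonneg _ K _ ht0
          intro t ht htle
          have ht1 : t ≤ 1 := le_trans htle (min_le_left _ _)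
          have ht2 : t ≤ Δ / Real.sqrt (v ⬝ᵥ v) := le_trans htle (min_le_right _ _)
          have h1 : t * Real.sqrt (v ⬝ᵥ v) ≤ Δ := (le_div_iff₀ hsq).mp ht2
          have h2 : t ^ 2 * (v ⬝ᵥ v) ≤ Δ ^ 2 := by
            have h3 := Real.sq_sqrt hnv.le
            nlinarith [mul_nonneg ht.le hsq.le]
          have hβt : β * t ^ 2 ≤ 1 := by
            rw [hβ, div_mul_eq_mul_div, div_le_one (by positivity)]
            nlinarith
          set σ := Real.sqrt (1 - β * t ^ 2) with hσdef
          have hσnn : 0 ≤ σ := Real.sqrt_nonneg _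
          have hσsq : σ ^ 2 = 1 - β * t ^ 2 := Real.sq_sqrt (by linarith)
          have hσ1 : σ ≤ 1 := by nlinarith [mul_self_nonneg (σ - 1)]
          set s := 1 - σ with hsdef
          have hs0 : 0 ≤ s := by rw [hsdef]; linarith
          have hs1 : s ≤ 1 := by rw [hsdef]; linarith
          have hsle : s ≤ β * t ^ 2 := by
            rw [hsdef]
            nlinarith [mul_nonneg hσnn (by linarith : (0:ℝ) ≤ 1 - σ)]
          have hfeq : (wstar + ((-s) • wstar + t • v)) ⬝ᵥ (wstar + ((-s) • wstar + t • v))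
              = Δ ^ 2 := by
            have h1' : wstar + ((-s) • wstar + t • v) = σ • wstar + t • v := by
              rw [hsdef]; module
            rw [h1', hnorm σ t v, dotProduct_comm wstar v, hv, hbd]
            have h3 : σ ^ 2 * Δ ^ 2 = Δ ^ 2 - t ^ 2 * (v ⬝ᵥ v) := by
              rw [hσsq]; linear_combination (-(t^2)) * hβΔ
            linarith [h3]
          have hb := base ((-s) • wstar + t • v) (le_of_eq hfeq)
          have e1 : r ⬝ᵥ ((-s) • wstar + t • v) = -(s * (r ⬝ᵥ wstar)) + t * (r ⬝ᵥ v) := by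
            simp only [dotProduct_add, dotProduct_smul, smul_eq_mul]
            ring
          have e2 : ((-s) • wstar + t • v) ⬝ᵥ H.mulVec ((-s) • wstar + t • v)
              = s ^ 2 * (wstar ⬝ᵥ H.mulVec wstar) - 2 * s * t * (wstar ⬝ᵥ H.mulVec v)
                + t ^ 2 * (v ⬝ᵥ H.mulVec v) := by
            simp only [Matrix.mulVec_add, Matrix.mulVec_smul, dotProduct_add,
              add_dotProduct, smul_dotProduct, dotProduct_smul,
              smul_eq_mul]
            rw [dv_symm H hH v wstar]
            ring
          rw [e1, e2] at hb
          apply hdiv _ _ t ht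
          have b1 : -(s * (r ⬝ᵥ wstar)) ≤ β * t ^ 2 * |r ⬝ᵥ wstar| := by
            nlinarith [abs_nonneg (r ⬝ᵥ wstar), neg_abs_le (r ⬝ᵥ wstar), hs0, hsle]
          have hss : s ^ 2 ≤ s := by nlinarith
          have b2 : s ^ 2 * (wstar ⬝ᵥ H.mulVec wstar) ≤ β * t ^ 2 * |wstar ⬝ᵥ H.mulVec wstar| := by
            have c1 := mul_le_mul_of_nonneg_left (le_abs_self (wstar ⬝ᵥ H.mulVec wstar)) (sq_nonneg s)
            have c2 := mul_le_mul_of_nonneg_right hss (abs_nonneg (wstar ⬝ᵥ H.mulVec wstar))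
            have c3 := mul_le_mul_of_nonneg_right hsle (abs_nonneg (wstar ⬝ᵥ H.mulVec wstar))
            nlinarith [c1, c2, c3]
          have hst : s * t ≤ β * t ^ 2 := by
            have c1 : s * t ≤ (β * t ^ 2) * t := mul_le_mul_of_nonneg_right hsle ht.le
            have c2 : (β * t ^ 2) * t ≤ (β * t ^ 2) * 1 :=
              mul_le_mul_of_nonneg_left ht1 (by positivity)
            nlinarith [c1, c2]
          have b3 : -(2 * s * t * (wstar ⬝ᵥ H.mulVec v)) ≤ 2 * (β * t ^ 2 * |wstar ⬝ᵥ H.mulVec v|) := by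
            have c1 : 0 ≤ (s * t) * (|wstar ⬝ᵥ H.mulVec v| + (wstar ⬝ᵥ H.mulVec v)) :=
              mul_nonneg (mul_nonneg hs0 ht.le)
                (by linarith [neg_le_abs (wstar ⬝ᵥ H.mulVec v)])
            have c2 := mul_le_mul_of_nonneg_right hst (abs_nonneg (wstar ⬝ᵥ H.mulVec v))
            nlinarith [c1, c2]
          have b4 : t ^ 2 * (v ⬝ᵥ H.mulVec v) ≤ t ^ 2 * |v ⬝ᵥ H.mulVec v| :=
            mul_le_mul_of_nonneg_left (le_abs_self _) (sq_nonneg t)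
          rw [hK]
          clear_value β σ s
          linarith [hb, b1, b2, b3, b4]
      -- the multiplier
      set lam := -(r ⬝ᵥ wstar) / Δ ^ 2 with hlamdef
      have hlam : 0 ≤ lam := div_nonneg (by linarith) (by positivity)
      have hlamns : lam * Δ ^ 2 = -(r ⬝ᵥ wstar) := by rw [hlamdef]; field_simp
      set u := r + lam • wstar with hu
      have hu0 : u ⬝ᵥ wstar = 0 := by
        rw [hu, add_dotProduct, smul_dotProduct, smul_eq_mul, hbd]
        linarith [hlamns]
      have h1 : 0 ≤ r ⬝ᵥ u := tangent u hu0
      have h2 : 0 ≤ r ⬝ᵥ (-u) := tangent (-u) (by rw [neg_dotProduct, hu0, neg_zero])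
      have hru : r ⬝ᵥ u = 0 := by rw [dotProduct_neg] at h2; linarith
      have huu : u ⬝ᵥ u = 0 := by
        nth_rewrite 1 [hu]
        rw [add_dotProduct, smul_dotProduct, smul_eq_mul, hru,
          dotProduct_comm wstar u, hu0]
        ring
      have hueq : u = 0 := dotProduct_self_eq_zero.mp huu
      have hgrad : (H + lam • (1 : Matrix (Fin D) (Fin D) ℝ)).mulVec wstar = -g := by
        rw [Matrix.add_mulVec, Matrix.smul_mulVec, Matrix.one_mulVec]
        have h5 : g + (H.mulVec wstar + lam • wstar) = 0 := by
          rw [← add_assoc, ← hr, ← hu]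
          exact hueq
        exact eq_neg_of_add_eq_zero_left (by rw [add_comm] at h5; exact h5)
      have hBsymm : (H + lam • (1 : Matrix (Fin D) (Fin D) ℝ)).IsSymm := by
        rw [Matrix.IsSymm, Matrix.transpose_add, Matrix.transpose_smul, Matrix.transpose_one, hH]
      -- PSD, first for v not orthogonal to wstar
      have aux : ∀ v : Fin D → ℝ, v ⬝ᵥ wstar ≠ 0 →
          0 ≤ v ⬝ᵥ (H + lam • (1 : Matrix (Fin D) (Fin D) ℝ)).mulVec v := by
        intro v hc
        have hv0 : v ≠ 0 := by rintro rfl; simp at hc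
        have hnv : 0 < v ⬝ᵥ v :=
          lt_of_le_of_ne (hnn v) (fun h => hv0 (dotProduct_self_eq_zero.mp h.symm))
        set α := -2 * (v ⬝ᵥ wstar) / (v ⬝ᵥ v) with hα
        have hα0 : α ≠ 0 := by
          rw [hα]
          exact div_ne_zero (by simpa using hc) (ne_of_gt hnv)
        have hαnv : α * (v ⬝ᵥ v) = -2 * (v ⬝ᵥ wstar) := by rw [hα]; field_simp
        have hfw2 : (wstar + α • v) ⬝ᵥ (wstar + α • v) = Δ ^ 2 := by
          have h1' : wstar + α • v = (1:ℝ) • wstar + α • v := by rw [one_smul]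
          rw [h1', hnorm 1 α v, hbd, dotProduct_comm wstar v]
          have h2' : α * (α * (v ⬝ᵥ v)) = α * (-2 * (v ⬝ᵥ wstar)) := by rw [hαnv]
          nlinarith [h2']
        have hk := key_expand H hH lam g wstar hgrad (wstar + α • v)
        have hmle := hmin (wstar + α • v) ((hfeas _).mp (le_of_eq hfw2))
        rw [hmval, hmval] at hmle
        have hsub : wstar + α • v - wstar = α • v := by abel
        rw [hsub, hfw2, hbd] at hk
        have e2 : (α • v) ⬝ᵥ (H + lam • (1 : Matrix (Fin D) (Fin D) ℝ)).mulVec (α • v)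
            = α ^ 2 * (v ⬝ᵥ (H + lam • (1 : Matrix (Fin D) (Fin D) ℝ)).mulVec v) := by
          rw [Matrix.mulVec_smul, smul_dotProduct, dotProduct_smul,
            smul_eq_mul, smul_eq_mul]
          ring
        rw [e2] at hk
        have hα2 : 0 < α ^ 2 := by positivity
        nlinarith [hk, hmle, hα2]
      have hq : ∀ v : Fin D → ℝ,
          0 ≤ v ⬝ᵥ (H + lam • (1 : Matrix (Fin D) (Fin D) ℝ)).mulVec v := by
        intro v
        rcases eq_or_ne (v ⬝ᵥ wstar) 0 with hc | hc
        · apply eps_nonneg _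
            (|wstar ⬝ᵥ (H + lam • (1 : Matrix (Fin D) (Fin D) ℝ)).mulVec wstar|) 1 one_pos
          intro t ht ht1
          set δ := Real.sqrt t with hδ
          have hδpos : 0 < δ := Real.sqrt_pos.mpr ht
          have hδsq : δ ^ 2 = t := Real.sq_sqrt ht.le
          have hp : (v + δ • wstar) ⬝ᵥ wstar ≠ 0 := by
            rw [add_dotProduct, hc, smul_dotProduct, smul_eq_mul, zero_add, hbd]
            exact mul_ne_zero (ne_of_gt hδpos) (by positivity)
          have hp2 : (v - δ • wstar) ⬝ᵥ wstar ≠ 0 := by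
            rw [sub_dotProduct, hc, smul_dotProduct, smul_eq_mul, zero_sub, hbd]
            exact neg_ne_zero.mpr (mul_ne_zero (ne_of_gt hδpos) (by positivity))
          have hm1 := aux _ hp
          have hm2 := aux _ hp2
          have hcross := dv_symm _ hBsymm wstar v
          have e1 : (v + δ • wstar) ⬝ᵥ (H + lam • (1 : Matrix (Fin D) (Fin D) ℝ)).mulVec (v + δ • wstar)
              = v ⬝ᵥ (H + lam • (1 : Matrix (Fin D) (Fin D) ℝ)).mulVec v
                + 2 * δ * (wstar ⬝ᵥ (H + lam • (1 : Matrix (Fin D) (Fin D) ℝ)).mulVec v)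
                + δ ^ 2 * (wstar ⬝ᵥ (H + lam • (1 : Matrix (Fin D) (Fin D) ℝ)).mulVec wstar) := by
            simp only [Matrix.mulVec_add, Matrix.mulVec_smul, dotProduct_add,
              add_dotProduct, smul_dotProduct, dotProduct_smul, smul_eq_mul]
            rw [← hcross]
            ring
          have e2 : (v - δ • wstar) ⬝ᵥ (H + lam • (1 : Matrix (Fin D) (Fin D) ℝ)).mulVec (v - δ • wstar)
              = v ⬝ᵥ (H + lam • (1 : Matrix (Fin D) (Fin D) ℝ)).mulVec v
                - 2 * δ * (wstar ⬝ᵥ (H + lam • (1 : Matrix (Fin D) (Fin D) ℝ)).mulVec v)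
                + δ ^ 2 * (wstar ⬝ᵥ (H + lam • (1 : Matrix (Fin D) (Fin D) ℝ)).mulVec wstar) := by
            simp only [Matrix.mulVec_sub, Matrix.mulVec_smul, dotProduct_sub,
              sub_dotProduct, smul_dotProduct, dotProduct_smul, smul_eq_mul]
            rw [← hcross]
            ring
          rw [e1] at hm1
          rw [e2] at hm2
          have hδQ : δ ^ 2 * (wstar ⬝ᵥ (H + lam • (1 : Matrix (Fin D) (Fin D) ℝ)).mulVec wstar)
              = t * (wstar ⬝ᵥ (H + lam • (1 : Matrix (Fin D) (Fin D) ℝ)).mulVec wstar) := by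
            rw [hδsq]
          have habs := mul_le_mul_of_nonneg_left
            (le_abs_self (wstar ⬝ᵥ (H + lam • (1 : Matrix (Fin D) (Fin D) ℝ)).mulVec wstar)) ht.le
          linarith [hm1, hm2, hδQ, habs]
        · exact aux v hc
      refine ⟨lam, hlam, hgrad, PosSemidef.of_dotProduct_mulVec_nonneg ?_ ?_, ?_⟩
      · rw [Matrix.IsHermitian, Matrix.conjTranspose_eq_transpose_of_trivial]
        exact hBsymm
      · intro x
        simp only [star_trivial]
        exact hq x
      · rw [hsum, hbd, Real.sqrt_sq hΔ.le, sub_self, mul_zero]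
  · -- reverse direction
    rintro ⟨lam, hlam, hgrad, hpsd, hcomp⟩ w hwfeas
    have hnw : w ⬝ᵥ w ≤ Δ ^ 2 := (hfeas w).mpr hwfeas
    have hkey := key_expand H hH lam g wstar hgrad w
    have hq := hpsd.dotProduct_mulVec_nonneg (w - wstar)
    simp only [star_trivial] at hq
    have hlast : 0 ≤ (lam/2) * (wstar ⬝ᵥ wstar - w ⬝ᵥ w) := by
      rcases eq_or_lt_of_le hlam with h0 | h0
      · rw [← h0]; ring_nf; exact le_refl 0
      · have hsq : Real.sqrt (∑ j, (wstar j)^2) = Δ := by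
          have := hcomp
          have h1 : Δ - Real.sqrt (∑ j, (wstar j)^2) = 0 := by
            rcases mul_eq_zero.mp this with h | h
            · exact absurd h (ne_of_gt h0)
            · exact h
          linarith
        have : wstar ⬝ᵥ wstar = Δ ^ 2 := by
          rw [hsum] at hsq
          rw [← hsq, Real.sq_sqrt (hnn wstar)]
        nlinarith
    rw [hmval, hmval]
    nlinarith
end
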